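/- For every x > 0: (i) the limit as τ → 1⁻ of J_fwd(x, τ) equals (1/2)·(log x)², and (ii) the limit as τ → 0⁺ of J_fwd(x, τ) equals J_BS(x). -/

import Mathlib

open MeasureTheory Set

/-- `IsAC f g` expresses that `f` is absolutely continuous on `[0,1]` with `f 0 = 0`:
`g` is its (integrable) derivative, `g²` is integrable (finite energy), and
`f t = ∫₀ᵗ g(s) ds` on `[0,1]`. -/
def IsAC (f g : ℝ → ℝ) : Prop :=
  IntervalIntegrable g volume 0 1 ∧
  IntervalIntegrable (fun t => (g t) ^ 2) volume 0 1 ∧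
  ∀ t ∈ Icc (0:ℝ) 1, f t = ∫ s in (0:ℝ)..t, g s

/-- The energy `(1/2)∫₀¹ (f'(t))² dt` of a path with derivative `g`. -/
noncomputable def energy (g : ℝ → ℝ) : ℝ :=
  (1 / 2) * ∫ t in (0:ℝ)..1, (g t) ^ 2

/-- The rate function `J_BS(x)` for an Asian option with averaging starting at time `0`
in the Black-Scholes model: the infimum of `(1/2)∫₀¹ (φ'(u))² du` over absolutely
continuous `φ` with `φ(0) = 0` and `∫₀¹ exp(φ(u)) du = x`. -/
noncomputable def JBS (x : ℝ) : ℝ :=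
  sInf { E | ∃ f g : ℝ → ℝ, IsAC f g ∧ (∫ u in (0:ℝ)..1, Real.exp (f u)) = x ∧ E = energy g }

/-- The rate function `J_fwd(x, τ)` for a forward start Asian option in the
Black-Scholes model: the infimum of `(1/2)∫₀¹ (f'(t))² dt` over absolutely continuous
`f` with `f(0) = 0` and `(1/(1-τ))∫_τ¹ exp(f(t)) dt = x`. -/
noncomputable def Jfwd (x τ : ℝ) : ℝ :=
  sInf { E | ∃ f g : ℝ → ℝ, IsAC f g ∧
    (1 / (1 - τ)) * (∫ t in τ..1, Real.exp (f t)) = x ∧ E = energy g }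

section Aux
open Filter intervalIntegral

noncomputable def Phi (z : ℝ) : ℝ := if z = 0 then 1 else (Real.exp z - 1) / z

lemma Phi_continuous : Continuous Phi := by
  rw [continuous_iff_continuousAt]
  intro z
  rcases eq_or_ne z 0 with rfl | hz
  · rw [← continuousWithinAt_compl_self]
    have h := (Real.hasDerivAt_exp 0)
    rw [hasDerivAt_iff_tendsto_slope] at h
    have h2 : Tendsto (fun w : ℝ => (Real.exp w - 1) / w) (nhdsWithin 0 {(0:ℝ)}ᶜ) (nhds 1) := by
      simpa [slope_fun_def_field, Real.exp_zero] using h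
    have h3 : Tendsto Phi (nhdsWithin 0 {(0:ℝ)}ᶜ) (nhds 1) := by
      apply h2.congr'
      filter_upwards [self_mem_nhdsWithin] with w hw
      have hw' : w ≠ 0 := hw
      simp [Phi, hw']
    simpa [ContinuousWithinAt, Phi] using h3
  · have hc : ContinuousAt (fun w => (Real.exp w - 1) / w) z :=
      ContinuousAt.div (by fun_prop) (by fun_prop) hz
    apply hc.congr
    filter_upwards [isOpen_ne.mem_nhds hz] with w hw
    simp [Phi, hw]

lemma Phi_pos (z : ℝ) : 0 < Phi z := by
  rcases lt_trichotomy z 0 with h | rfl | h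
  · have : Real.exp z < 1 := Real.exp_lt_one_iff.mpr h
    simp only [Phi, if_neg h.ne]
    exact div_pos_of_neg_of_neg (by linarith) h
  · simp [Phi]
  · have : 1 < Real.exp z := by linarith [Real.add_one_le_exp z]
    simp only [Phi, if_neg h.ne']
    exact div_pos (by linarith) h

lemma Phi_le (z : ℝ) : Phi z ≤ Real.exp |z| := by
  have hone : (1:ℝ) ≤ Real.exp |z| := by
    rw [← Real.exp_zero]; exact Real.exp_le_exp.mpr (abs_nonneg z)
  rcases lt_trichotomy z 0 with h | rfl | h
  · simp only [Phi, if_neg h.ne]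
    have h2 : (Real.exp z - 1) / z ≤ 1 := by
      rw [div_le_one_iff]
      exact Or.inr (Or.inr ⟨h, by linarith [Real.add_one_le_exp z]⟩)
    linarith
  · simpa [Phi] using hone
  · simp only [Phi, if_neg h.ne']
    rw [div_le_iff₀ h, abs_of_pos h]
    have h1 : -z + 1 ≤ Real.exp (-z) := Real.add_one_le_exp (-z)
    rw [Real.exp_neg] at h1
    have hez : 0 < Real.exp z := Real.exp_pos z
    have h3 : (-z + 1) * Real.exp z ≤ 1 := by
      calc (-z + 1) * Real.exp z ≤ (Real.exp z)⁻¹ * Real.exp z := by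
            apply mul_le_mul_of_nonneg_right h1 hez.le
        _ = 1 := inv_mul_cancel₀ hez.ne'
    nlinarith
-- (Phi already defined)

lemma integral_exp_ramp (a : ℝ) {σ : ℝ} (hσ : 0 < σ) :
    ∫ u in (0:ℝ)..σ, Real.exp (a * u) = σ * Phi (a * σ) := by
  rcases eq_or_ne a 0 with rfl | ha
  · simp [Phi]
  · have := intervalIntegral.integral_comp_mul_left (fun t => Real.exp t) ha (a := 0) (b := σ)
    rw [this]
    simp only [mul_zero, integral_exp, Real.exp_zero, smul_eq_mul]
    rw [Phi, if_neg (mul_ne_zero ha hσ.ne')]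
    field_simp

lemma sq_integral_le {g : ℝ → ℝ} (hg : IntervalIntegrable g volume 0 1)
    (hg2 : IntervalIntegrable (fun t => (g t) ^ 2) volume 0 1) {t : ℝ} (ht : t ∈ Icc (0:ℝ) 1) :
    (∫ s in (0:ℝ)..t, g s) ^ 2 ≤ t * ∫ s in (0:ℝ)..1, (g s)^2 := by
  obtain ⟨ht0, ht1⟩ := ht
  have hsub : uIcc (0:ℝ) t ⊆ uIcc (0:ℝ) 1 := uIcc_subset_uIcc (by simp) (by simp [ht0, ht1])
  have hgt : IntervalIntegrable g volume 0 t := hg.mono_set hsub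
  have hg2t : IntervalIntegrable (fun s => (g s)^2) volume 0 t := hg2.mono_set hsub
  have htail : ∫ s in (0:ℝ)..t, (g s)^2 ≤ ∫ s in (0:ℝ)..1, (g s)^2 := by
    apply intervalIntegral.integral_mono_interval le_rfl ht0 ht1
    · filter_upwards with s using sq_nonneg _
    · exact hg2
  rcases eq_or_lt_of_le ht0 with rfl | ht0'
  · simp
  · set K := ∫ s in (0:ℝ)..t, g s with hK
    have expand : ∫ s in (0:ℝ)..t, (g s - K / t)^2
        = (∫ s in (0:ℝ)..t, (g s)^2) - K^2 / t := by
      have : ∀ s, (g s - K / t)^2 = (g s)^2 - (2 * (K/t)) * g s + (K/t)^2 := by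
        intro s; ring
      rw [intervalIntegral.integral_congr (fun s _ => this s)]
      rw [intervalIntegral.integral_add ((hg2t.sub ((hgt.const_mul _)))) intervalIntegrable_const]
      rw [intervalIntegral.integral_sub hg2t (hgt.const_mul _)]
      rw [intervalIntegral.integral_const_mul, intervalIntegral.integral_const]
      rw [← hK]
      field_simp
      have h2 : t^2 * t⁻¹^2 = 1 := by rw [inv_pow, mul_inv_cancel₀ (pow_ne_zero 2 ht0'.ne')]
      linear_combination K^2 * h2
    have hnn : 0 ≤ ∫ s in (0:ℝ)..t, (g s - K / t)^2 := by
      apply intervalIntegral.integral_nonneg ht0'.le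
      intro s _; exact sq_nonneg _
    rw [expand] at hnn
    have : K^2 / t ≤ ∫ s in (0:ℝ)..t, (g s)^2 := by linarith
    calc K^2 = t * (K^2 / t) := by field_simp
      _ ≤ t * ∫ s in (0:ℝ)..1, (g s)^2 := by
          apply mul_le_mul_of_nonneg_left (this.trans htail) ht0'.le

lemma IntervalIntegrable.comp_affine {f : ℝ → ℝ} {α β c d : ℝ}
    (hf : IntervalIntegrable f volume (α*c+β) (α*d+β)) (hα : α ≠ 0) :
    IntervalIntegrable (fun u => f (α*u+β)) volume c d := by
  have h1 := hf.comp_mul_left (c := α)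
  have h2 := h1.comp_add_right (β/α)
  have heq : (fun x => (fun y => f (α * y)) (x + β/α)) = fun u => f (α*u+β) := by
    funext u
    simp only []
    congr 1
    field_simp
  rw [heq] at h2
  have e1 : (α*c+β)/α - β/α = c := by field_simp; ring
  have e2 : (α*d+β)/α - β/α = d := by field_simp; ring
  rwa [e1, e2] at h2

noncomputable def glue (g : ℝ → ℝ) (σ a α β : ℝ) : ℝ → ℝ :=
  fun u => if u ≤ σ then a else α * g (α*u+β)

section Builder

variable {g : ℝ → ℝ} {σ a α β τ : ℝ}

lemma glue_int (hg : IntervalIntegrable g volume 0 1)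
    (hσ0 : 0 < σ) (hσ1 : σ ≤ 1) (hα : 0 < α) (hτ : α*σ+β = τ) (h1 : α*1+β = 1)
    (hτ0 : 0 ≤ τ) :
    IntervalIntegrable (glue g σ a α β) volume 0 1 := by
  have hτ1 : τ ≤ 1 := by nlinarith
  have hwin : IntervalIntegrable g volume τ 1 :=
    hg.mono_set (uIcc_subset_uIcc (by simp [hτ0, hτ1]) (by simp))
  have hpart1 : IntervalIntegrable (glue g σ a α β) volume 0 σ := by
    rw [intervalIntegrable_iff]
    refine MeasureTheory.IntegrableOn.congr_fun (integrableOn_const (C := a)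
      (by rw [uIoc_of_le hσ0.le]; exact measure_Ioc_lt_top.ne))
      (fun u hu => ?_) measurableSet_uIoc
    rw [uIoc_of_le hσ0.le] at hu
    simp [glue, hu.2]
  have hpart2 : IntervalIntegrable (glue g σ a α β) volume σ 1 := by
    have hcomp : IntervalIntegrable (fun u => g (α*u+β)) volume σ 1 := by
      apply IntervalIntegrable.comp_affine (by rwa [hτ, h1]) hα.ne'
    rw [intervalIntegrable_iff] at *
    refine MeasureTheory.IntegrableOn.congr_fun (hcomp.const_mul α)
      (fun u hu => ?_) measurableSet_uIoc
    rw [uIoc_of_le hσ1] at hu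
    simp [glue, not_le.mpr hu.1]
  exact hpart1.trans hpart2

end Builder

lemma glue_sq : (fun u => (glue g σ a α β u)^2) = glue (fun t => α * (g t)^2) σ (a^2) α β := by
  funext u
  by_cases h : u ≤ σ <;> simp [glue, h] <;> ring

lemma glue_sq_int (hg2 : IntervalIntegrable (fun t => (g t)^2) volume 0 1)
    (hσ0 : 0 < σ) (hσ1 : σ ≤ 1) (hα : 0 < α) (hτ : α*σ+β = τ) (h1 : α*1+β = 1)
    (hτ0 : 0 ≤ τ) :
    IntervalIntegrable (fun u => (glue g σ a α β u)^2) volume 0 1 := by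
  rw [glue_sq]
  exact glue_int (hg2.const_mul α) hσ0 hσ1 hα hτ h1 hτ0

lemma glue_primitive_left (hσ0 : 0 < σ) {u : ℝ} (hu : u ∈ Icc (0:ℝ) σ) :
    (∫ s in (0:ℝ)..u, glue g σ a α β s) = a * u := by
  rw [intervalIntegral.integral_congr (g := fun _ => a) (fun s hs => ?_)]
  · simp [mul_comm]
  · rw [uIcc_of_le hu.1] at hs
    simp [glue, le_trans hs.2 hu.2]

lemma glue_primitive_right (hg : IntervalIntegrable g volume 0 1)
    (hσ0 : 0 < σ) (hσ1 : σ ≤ 1) (hα : 0 < α) (hτ : α*σ+β = τ) (h1 : α*1+β = 1)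
    (hτ0 : 0 ≤ τ) {u : ℝ} (hu : u ∈ Icc σ 1) :
    (∫ s in (0:ℝ)..u, glue g σ a α β s) = a * σ + ∫ t in τ..(α*u+β), g t := by
  have hint := glue_int (a := a) hg hσ0 hσ1 hα hτ h1 hτ0
  have I1 : IntervalIntegrable (glue g σ a α β) volume 0 σ :=
    hint.mono_set (uIcc_subset_uIcc (by simp) (by simp [hσ0.le, hσ1]))
  have I2 : IntervalIntegrable (glue g σ a α β) volume σ u :=
    hint.mono_set (uIcc_subset_uIcc (by simp [hσ0.le, hσ1]) (by
      simp [le_trans hσ0.le hu.1, hu.2]))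
  rw [← intervalIntegral.integral_add_adjacent_intervals I1 I2]
  congr 1
  · exact glue_primitive_left hσ0 (by simp [hσ0.le])
  · rw [intervalIntegral.integral_congr_ae (g := fun s => α * g (α*s+β)) ?_]
    · rw [intervalIntegral.integral_const_mul,
        intervalIntegral.integral_comp_mul_add g hα.ne' β, hτ]
      rw [smul_eq_mul, ← mul_assoc, mul_inv_cancel₀ hα.ne', one_mul]
    · filter_upwards with s hs
      rw [uIoc_of_le hu.1] at hs
      simp [glue, not_le.mpr hs.1]

lemma glue_energy (hg2 : IntervalIntegrable (fun t => (g t)^2) volume 0 1)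
    (hσ0 : 0 < σ) (hσ1 : σ ≤ 1) (hα : 0 < α) (hτ : α*σ+β = τ) (h1 : α*1+β = 1)
    (hτ0 : 0 ≤ τ) :
    (∫ u in (0:ℝ)..1, (glue g σ a α β u)^2) = a^2*σ + α * ∫ t in τ..1, (g t)^2 := by
  have := glue_primitive_right (g := fun t => α * (g t)^2) (a := a^2)
    (hg2.const_mul α) hσ0 hσ1 hα hτ h1 hτ0 (u := 1) (by simp [hσ1])
  rw [glue_sq, this, h1, intervalIntegral.integral_const_mul]

lemma glue_exp_right (hg : IntervalIntegrable g volume 0 1)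
    (hσ0 : 0 < σ) (hσ1 : σ ≤ 1) (hα : 0 < α) (hτ : α*σ+β = τ) (h1 : α*1+β = 1)
    (hτ0 : 0 ≤ τ) :
    (∫ u in σ..1, Real.exp (∫ s in (0:ℝ)..u, glue g σ a α β s))
      = Real.exp (a*σ - ∫ s in (0:ℝ)..τ, g s)
        * (α⁻¹ * ∫ t in τ..1, Real.exp (∫ s in (0:ℝ)..t, g s)) := by
  have hEq : EqOn (fun u => Real.exp (∫ s in (0:ℝ)..u, glue g σ a α β s))
      (fun u => Real.exp (a*σ - ∫ s in (0:ℝ)..τ, g s)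
        * (fun t => Real.exp (∫ s in (0:ℝ)..t, g s)) (α*u+β)) (uIcc σ 1) := by
    intro u hu
    rw [uIcc_of_le hσ1] at hu
    have hw0 : 0 ≤ α*u+β := le_trans hτ0 (by nlinarith [hu.1])
    have hw1 : α*u+β ≤ 1 := by nlinarith [hu.2]
    have h0τ : 0 ≤ τ := hτ0
    have hτ1 : τ ≤ 1 := by nlinarith [hσ0, hσ1]
    have hIa : IntervalIntegrable g volume 0 (α*u+β) :=
      hg.mono_set (uIcc_subset_uIcc (by simp) (by simp [hw0, hw1]))
    have hIb : IntervalIntegrable g volume 0 τ :=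
      hg.mono_set (uIcc_subset_uIcc (by simp) (by simp [h0τ, hτ1]))
    have hsub := intervalIntegral.integral_interval_sub_left hIa hIb
    simp only []
    rw [glue_primitive_right hg hσ0 hσ1 hα hτ h1 hτ0 hu, ← hsub, ← Real.exp_add]
    ring_nf
  have hcv := intervalIntegral.integral_comp_mul_add (a := σ) (b := 1)
    (fun t => Real.exp (∫ s in (0:ℝ)..t, g s)) hα.ne' β
  rw [hτ, h1] at hcv
  rw [intervalIntegral.integral_congr hEq, intervalIntegral.integral_const_mul, hcv,
    smul_eq_mul]

/-- The admissible set for `JBS x`. -/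
def SBS (x : ℝ) : Set ℝ :=
  { E | ∃ f g : ℝ → ℝ, IsAC f g ∧ (∫ u in (0:ℝ)..1, Real.exp (f u)) = x ∧ E = energy g }

/-- The admissible set for `Jfwd x τ`. -/
def Sfwd (x τ : ℝ) : Set ℝ :=
  { E | ∃ f g : ℝ → ℝ, IsAC f g ∧
    (1 / (1 - τ)) * (∫ t in τ..1, Real.exp (f t)) = x ∧ E = energy g }

lemma JBS_eq (x : ℝ) : JBS x = sInf (SBS x) := rfl
lemma Jfwd_eq (x τ : ℝ) : Jfwd x τ = sInf (Sfwd x τ) := rfl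

lemma SBS_nonneg {x E : ℝ} (hE : E ∈ SBS x) : 0 ≤ E := by
  obtain ⟨f, g, _, _, rfl⟩ := hE
  have : 0 ≤ ∫ t in (0:ℝ)..1, (g t)^2 :=
    intervalIntegral.integral_nonneg zero_le_one (fun s _ => sq_nonneg _)
  rw [energy]; linarith

lemma Sfwd_nonneg {x τ E : ℝ} (hE : E ∈ Sfwd x τ) : 0 ≤ E := by
  obtain ⟨f, g, _, _, rfl⟩ := hE
  have : 0 ≤ ∫ t in (0:ℝ)..1, (g t)^2 :=
    intervalIntegral.integral_nonneg zero_le_one (fun s _ => sq_nonneg _)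
  rw [energy]; linarith

lemma SBS_bdd (x : ℝ) : BddBelow (SBS x) := ⟨0, fun E hE => SBS_nonneg hE⟩
lemma Sfwd_bdd (x τ : ℝ) : BddBelow (Sfwd x τ) := ⟨0, fun E hE => Sfwd_nonneg hE⟩

lemma IsAC.continuousOn {f g : ℝ → ℝ} (h : IsAC f g) : ContinuousOn f (Icc (0:ℝ) 1) := by
  have h1 : ContinuousOn (fun t => ∫ s in (0:ℝ)..t, g s) (uIcc (0:ℝ) 1) :=
    intervalIntegral.continuousOn_primitive_interval' h.1 left_mem_uIcc
  rw [uIcc_of_le zero_le_one] at h1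
  exact h1.congr h.2.2

/-- If the average of `exp ∘ f` over `[p,1]` is `x`, `f` hits `log x`. -/
lemma exists_eq_log {f : ℝ → ℝ} {p x : ℝ} (hf : ContinuousOn f (Icc p 1)) (hp : p < 1)
    (hx : 0 < x)
    (hfi : IntervalIntegrable (fun t => Real.exp (f t)) volume p 1)
    (hconstr : (1 / (1 - p)) * ∫ t in p..1, Real.exp (f t) = x) :
    ∃ t ∈ Icc p 1, f t = Real.log x := by
  by_contra hcon
  push_neg at hcon
  have h1p : (0:ℝ) < 1 - p := by linarith
  have hint : ∫ t in p..1, Real.exp (f t) = (1-p) * x := by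
    rw [one_div, inv_mul_eq_div, div_eq_iff h1p.ne'] at hconstr
    linarith
  have hxint : IntervalIntegrable (fun _ : ℝ => x) volume p 1 := intervalIntegrable_const
  by_cases hA : ∃ t ∈ Icc p 1, f t < Real.log x
  · by_cases hB : ∃ t ∈ Icc p 1, Real.log x < f t
    · obtain ⟨t₁, ht₁, hft₁⟩ := hA
      obtain ⟨t₂, ht₂, hft₂⟩ := hB
      have hsub : uIcc t₁ t₂ ⊆ Icc p 1 := uIcc_subset_Icc ht₁ ht₂
      have hivt := intermediate_value_uIcc (hf.mono hsub)
      have hmem : Real.log x ∈ uIcc (f t₁) (f t₂) := by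
        rw [mem_uIcc]; left; exact ⟨hft₁.le, hft₂.le⟩
      obtain ⟨t, htmem, htval⟩ := hivt hmem
      exact hcon t (hsub htmem) htval
    · -- all values > log x is false; here all values ≤ log x, so all < log x
      push_neg at hB
      have hpos : 0 < ∫ t in p..1, (x - Real.exp (f t)) := by
        apply intervalIntegral_pos_of_pos_on (hxint.sub hfi) ?_ hp
        intro t ht
        have ht' : t ∈ Icc p 1 := ⟨ht.1.le, ht.2.le⟩
        have : f t < Real.log x := lt_of_le_of_ne (hB t ht') (hcon t ht')
        have := Real.exp_lt_exp.mpr this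
        rw [Real.exp_log hx] at this
        linarith
      rw [intervalIntegral.integral_sub hxint hfi, hint] at hpos
      simp at hpos
  · push_neg at hA
    have hpos : 0 < ∫ t in p..1, (Real.exp (f t) - x) := by
      apply intervalIntegral_pos_of_pos_on (hfi.sub hxint) ?_ hp
      intro t ht
      have ht' : t ∈ Icc p 1 := ⟨ht.1.le, ht.2.le⟩
      have : Real.log x < f t := lt_of_le_of_ne (hA t ht') (Ne.symm (hcon t ht'))
      have := Real.exp_lt_exp.mpr this
      rw [Real.exp_log hx] at this
      linarith
    rw [intervalIntegral.integral_sub hfi hxint, hint] at hpos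
    simp at hpos

lemma Sfwd_lower {x τ E : ℝ} (hx : 0 < x) (hτ0 : 0 < τ) (hτ1 : τ < 1) (hE : E ∈ Sfwd x τ) :
    (Real.log x)^2 / 2 ≤ E := by
  obtain ⟨f, g, hAC, hconstr, rfl⟩ := hE
  obtain ⟨hg, hg2, hrep⟩ := hAC
  have hfc : ContinuousOn f (Icc τ 1) :=
    (IsAC.continuousOn ⟨hg, hg2, hrep⟩).mono (Icc_subset_Icc hτ0.le le_rfl)
  have hfi : IntervalIntegrable (fun t => Real.exp (f t)) volume τ 1 := by
    apply ContinuousOn.intervalIntegrable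
    rw [uIcc_of_le hτ1.le]
    exact (Real.continuous_exp.comp_continuousOn hfc)
  obtain ⟨t₀, ht₀, hft₀⟩ := exists_eq_log hfc hτ1 hx hfi hconstr
  have ht₀' : t₀ ∈ Icc (0:ℝ) 1 := ⟨le_trans hτ0.le ht₀.1, ht₀.2⟩
  have hval : f t₀ = ∫ s in (0:ℝ)..t₀, g s := hrep t₀ ht₀'
  have hsq := sq_integral_le hg hg2 ht₀'
  have h2 : 0 ≤ ∫ s in (0:ℝ)..1, (g s)^2 :=
    intervalIntegral.integral_nonneg zero_le_one (fun s _ => sq_nonneg _)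
  have h3 : t₀ * (∫ s in (0:ℝ)..1, (g s)^2) ≤ ∫ s in (0:ℝ)..1, (g s)^2 := by
    nlinarith [ht₀'.2]
  rw [← hval, hft₀] at hsq
  rw [energy]
  nlinarith

lemma ramp_mem {x τ : ℝ} (hx : 0 < x) (hτ0 : 0 < τ) (hτ1 : τ < 1) :
    (Real.log x)^2 / (2*τ) ∈ Sfwd x τ := by
  set a : ℝ := Real.log x / τ with ha
  have hg : IntervalIntegrable (fun _ : ℝ => (0:ℝ)) volume 0 1 := intervalIntegrable_const
  have hg2 : IntervalIntegrable (fun _ : ℝ => ((0:ℝ))^2) volume 0 1 := by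
    simpa using (intervalIntegrable_const (c := (0:ℝ)))
  have hb1 : (1:ℝ)*τ+0 = τ := by ring
  have hb2 : (1:ℝ)*1+0 = 1 := by ring
  refine ⟨fun u => ∫ s in (0:ℝ)..u, glue (fun _ => 0) τ a 1 0 s,
    glue (fun _ => 0) τ a 1 0, ⟨?_, ?_, fun t _ => rfl⟩, ?_, ?_⟩
  · exact glue_int hg hτ0 hτ1.le one_pos hb1 hb2 hτ0.le
  · exact glue_sq_int hg2 hτ0 hτ1.le one_pos hb1 hb2 hτ0.le
  · have hEq : EqOn (fun t => Real.exp (∫ s in (0:ℝ)..t, glue (fun _ => 0) τ a 1 0 s))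
        (fun _ => x) (uIcc τ 1) := by
      intro t ht
      rw [uIcc_of_le hτ1.le] at ht
      have := glue_primitive_right (g := fun _ => (0:ℝ)) (a := a)
        hg hτ0 hτ1.le one_pos hb1 hb2 hτ0.le ht
      simp only [intervalIntegral.integral_zero, add_zero] at this
      simp only [this]
      rw [ha, div_mul_cancel₀ _ hτ0.ne', Real.exp_log hx]
    rw [intervalIntegral.integral_congr hEq, intervalIntegral.integral_const, smul_eq_mul]
    have h1τ : (1:ℝ) - τ ≠ 0 := by linarith
    field_simp
  · have he := glue_energy (g := fun _ => (0:ℝ)) (a := a) hg2 hτ0 hτ1.le one_pos hb1 hb2 hτ0.le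
    rw [energy, he]
    have : ∫ t in τ..(1:ℝ), ((fun _ => (0:ℝ)) t)^2 = 0 := by simp
    rw [this, ha]
    field_simp
    ring

lemma Jfwd_between {x τ : ℝ} (hx : 0 < x) (hτ0 : 0 < τ) (hτ1 : τ < 1) :
    (Real.log x)^2 / 2 ≤ Jfwd x τ ∧ Jfwd x τ ≤ (Real.log x)^2 / (2*τ) := by
  constructor
  · exact le_csInf ⟨_, ramp_mem hx hτ0 hτ1⟩ (fun E hE => Sfwd_lower hx hτ0 hτ1 hE)
  · exact csInf_le (Sfwd_bdd x τ) (ramp_mem hx hτ0 hτ1)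

lemma part_one {x : ℝ} (hx : 0 < x) :
    Filter.Tendsto (fun τ : ℝ => Jfwd x τ) (nhdsWithin 1 (Iio 1))
      (nhds ((1 / 2) * (Real.log x) ^ 2)) := by
  have hmem : Ioo (0:ℝ) 1 ∈ nhdsWithin (1:ℝ) (Iio 1) :=
    Ioo_mem_nhdsLT (by norm_num)
  have hlow : Filter.Tendsto (fun _ : ℝ => (Real.log x)^2/2) (nhdsWithin 1 (Iio 1))
      (nhds ((1/2) * (Real.log x)^2)) := by
    rw [show (1/2) * (Real.log x)^2 = (Real.log x)^2/2 by ring]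
    exact tendsto_const_nhds
  have hup : Filter.Tendsto (fun τ : ℝ => (Real.log x)^2/(2*τ)) (nhdsWithin 1 (Iio 1))
      (nhds ((1/2) * (Real.log x)^2)) := by
    have hc : ContinuousAt (fun τ : ℝ => (Real.log x)^2/(2*τ)) 1 :=
      ContinuousAt.div continuousAt_const (by fun_prop) (by norm_num)
    have h2 := hc.tendsto.mono_left (nhdsWithin_le_nhds (s := Iio 1))
    convert h2 using 2
    ring
  refine tendsto_of_tendsto_of_tendsto_of_le_of_le' hlow hup ?_ ?_
  · filter_upwards [hmem] with τ hτ using (Jfwd_between hx hτ.1 hτ.2).1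
  · filter_upwards [hmem] with τ hτ using (Jfwd_between hx hτ.1 hτ.2).2

lemma SBS_nonempty {x : ℝ} (hx : 0 < x) : (SBS x).Nonempty := by
  -- find c with Phi c = x
  have h1 : Phi (-2/x) ≤ x := by
    have hz : -2/x < 0 := div_neg_of_neg_of_pos (by norm_num) hx
    rw [Phi, if_neg hz.ne]
    have he : Real.exp (-2/x) > 0 := Real.exp_pos _
    rw [div_le_iff_of_neg hz]
    have hm : x * (-2/x) = -2 := by field_simp
    rw [hm]
    linarith
  have h2 : x ≤ Phi (4*x) := by
    have hz : 0 < 4*x := by linarith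
    rw [Phi, if_neg hz.ne']
    rw [le_div_iff₀ hz]
    have h3 := Real.add_one_le_exp (2*x)
    have hsq : (1 + 2*x)^2 ≤ (Real.exp (2*x)) * Real.exp (2*x) := by
      nlinarith [Real.exp_pos (2*x)]
    have hsq2 : Real.exp (2*x) * Real.exp (2*x) = Real.exp (4*x) := by
      rw [← Real.exp_add]; ring_nf
    nlinarith [Real.exp_pos (4*x), sq_nonneg x]
  have hc : ∃ c ∈ uIcc (-2/x) (4*x), Phi c = x := by
    have := intermediate_value_uIcc (Phi_continuous.continuousOn (s := uIcc (-2/x) (4*x)))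
    have hmem : x ∈ uIcc (Phi (-2/x)) (Phi (4*x)) := by
      rw [mem_uIcc]; left; exact ⟨h1, h2⟩
    obtain ⟨c, hcmem, hcval⟩ := this hmem
    exact ⟨c, hcmem, hcval⟩
  obtain ⟨c, _, hcval⟩ := hc
  refine ⟨c^2/2, fun u => c*u, fun _ => c, ⟨intervalIntegrable_const, ?_, fun t _ => ?_⟩, ?_, ?_⟩
  · simpa using (intervalIntegrable_const (c := c^2) (μ := volume) (a := (0:ℝ)) (b := 1))
  · rw [intervalIntegral.integral_const, smul_eq_mul, mul_comm]; simp
  · rw [show (∫ u in (0:ℝ)..1, Real.exp (c*u)) = 1 * Phi (c*1) from integral_exp_ramp c one_pos]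
    simpa using hcval
  · rw [energy, intervalIntegral.integral_const, smul_eq_mul]
    norm_num
    ring

lemma JBS_nonneg {x : ℝ} (hx : 0 < x) : 0 ≤ JBS x :=
  le_csInf (SBS_nonempty hx) (fun E hE => SBS_nonneg hE)

lemma Jfwd_le_JBS {x τ : ℝ} (hx : 0 < x) (hτ0 : 0 < τ) (hτ1 : τ < 1) :
    Jfwd x τ ≤ JBS x / (1 - τ) := by
  have h1τ : (0:ℝ) < 1 - τ := by linarith
  have key : ∀ E ∈ SBS x, Jfwd x τ * (1-τ) ≤ E := by
    rintro E ⟨f, g, ⟨hg, hg2, hrep⟩, hconstr, rfl⟩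
    set α : ℝ := 1/(1-τ) with hα
    have hαpos : 0 < α := by positivity
    set β : ℝ := -τ/(1-τ) with hβ
    have hb1 : α*τ+β = 0 := by rw [hα, hβ]; field_simp; ring
    have hb2 : α*1+β = 1 := by rw [hα, hβ]; field_simp; ring
    have hmem : energy (glue g τ 0 α β) ∈ Sfwd x τ := by
      refine ⟨fun u => ∫ s in (0:ℝ)..u, glue g τ 0 α β s, glue g τ 0 α β,
        ⟨glue_int hg hτ0 hτ1.le hαpos hb1 hb2 le_rfl,
         glue_sq_int hg2 hτ0 hτ1.le hαpos hb1 hb2 le_rfl, fun t _ => rfl⟩, ?_, rfl⟩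
      rw [glue_exp_right hg hτ0 hτ1.le hαpos hb1 hb2 le_rfl]
      have hc : (∫ t in (0:ℝ)..1, Real.exp (∫ s in (0:ℝ)..t, g s))
          = ∫ u in (0:ℝ)..1, Real.exp (f u) := by
        apply intervalIntegral.integral_congr
        intro t ht
        rw [uIcc_of_le zero_le_one] at ht
        simp only []
        rw [hrep t ht]
      rw [hc, hconstr]
      simp only [zero_mul, intervalIntegral.integral_same, zero_sub, sub_zero,
        Real.exp_zero, one_mul]
      rw [hα]
      field_simp
    have hle : Jfwd x τ ≤ energy (glue g τ 0 α β) := csInf_le (Sfwd_bdd x τ) hmem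
    have hen : energy (glue g τ 0 α β) = energy g / (1-τ) := by
      rw [energy, glue_energy hg2 hτ0 hτ1.le hαpos hb1 hb2 le_rfl, energy]
      rw [hα]
      field_simp
      ring
    calc Jfwd x τ * (1-τ) ≤ energy (glue g τ 0 α β) * (1-τ) := by
          exact mul_le_mul_of_nonneg_right hle h1τ.le
      _ = energy g := by rw [hen]; field_simp
  rw [JBS_eq, le_div_iff₀ h1τ]
  exact le_csInf (SBS_nonempty hx) key

lemma exp_neg_le {r : ℝ} (hr : 0 ≤ r) : Real.exp (-r) ≤ 1 - r + r^2 := by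
  have h1 : Real.exp (-r) * Real.exp r = 1 := by rw [← Real.exp_add]; simp
  have h2 : (1:ℝ) + r ≤ Real.exp r := by linarith [Real.add_one_le_exp r]
  have h3 : Real.exp (-r) * (1 + r) ≤ 1 := by
    calc Real.exp (-r) * (1 + r) ≤ Real.exp (-r) * Real.exp r :=
          mul_le_mul_of_nonneg_left h2 (Real.exp_pos _).le
      _ = 1 := h1
  nlinarith [Real.exp_pos (-r), sq_nonneg r, pow_nonneg hr 3]

lemma aux_left {x σ r p e q : ℝ} (hx : 0 < x) (hσ0 : 0 < σ) (hσ1 : σ ≤ 1)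
    (hp0 : 0 ≤ p) (hpq : p ≤ q) (he : e ≤ 1 - r + r^2) (hrh : r ≤ 1/2) (hr0 : 0 < r)
    (hq : σ * q ≤ x * (r/2)) : σ*p + (1-σ)*x*e ≤ x := by
  have h1 : σ*p ≤ σ*q := mul_le_mul_of_nonneg_left hpq hσ0.le
  have h2 : (1-σ)*x*e ≤ (1-σ)*x*(1 - r + r^2) :=
    mul_le_mul_of_nonneg_left he (by nlinarith only [hσ1, hx])
  have t1 : 0 ≤ σ*x*(1 - r + r^2) := by
    apply mul_nonneg (mul_nonneg hσ0.le hx.le)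
    nlinarith only [hrh, hr0]
  have t2 : 0 ≤ x*(r/2 - r^2) := by
    apply mul_nonneg hx.le
    nlinarith only [hrh, hr0]
  nlinarith only [h1, h2, hq, t1, t2]

lemma aux_right {x σ r p er : ℝ} (hx : 0 < x) (hσ0 : 0 < σ) (hσh : σ ≤ 1/2)
    (hp : 0 < p) (her : 1 + r ≤ er) (hr2σ : 2*σ ≤ r) (hr0 : 0 < r) :
    x ≤ σ*p + (1-σ)*x*er := by
  have h0 : 1 ≤ (1-σ)*(1+r) := by
    nlinarith only [mul_nonneg (sub_nonneg.mpr hr2σ) (by linarith only [hσh] : (0:ℝ) ≤ 1 - σ),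
      mul_nonneg hσ0.le (by linarith only [hσh] : (0:ℝ) ≤ 1 - 2*σ)]
  have h1 : x ≤ (1-σ)*x*(1+r) := by
    calc x = x*1 := by ring
      _ ≤ x*((1-σ)*(1+r)) := mul_le_mul_of_nonneg_left h0 hx.le
      _ = (1-σ)*x*(1+r) := by ring
  have h2 : (1-σ)*x*(1+r) ≤ (1-σ)*x*er := by
    apply mul_le_mul_of_nonneg_left her
    nlinarith only [hσh, hx]
  nlinarith only [h1, h2, mul_pos hσ0 hp]

set_option maxHeartbeats 1000000 in
lemma JBS_le_Jfwd_add {x : ℝ} (hx : 0 < x) {η : ℝ} (hη : 0 < η) :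
    ∀ᶠ τ in nhdsWithin (0:ℝ) (Ioi 0), JBS x - η ≤ Jfwd x τ := by
  obtain ⟨K, hK⟩ : ∃ v : ℝ, v = JBS x := ⟨_, rfl⟩
  have hK0 : 0 ≤ K := hK ▸ JBS_nonneg hx
  obtain ⟨M, hM⟩ : ∃ v : ℝ, v = 2*K+1 := ⟨_, rfl⟩
  have hM1 : 1 ≤ M := by rw [hM]; linarith only [hK0]
  obtain ⟨K₂, hK₂⟩ : ∃ v : ℝ, v = 2 + 2*Real.exp 2 / x := ⟨_, rfl⟩
  have hK₂2 : 2 ≤ K₂ := by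
    have h0 : 0 < 2*Real.exp 2 / x := by positivity
    rw [hK₂]; linarith only [h0]
  -- eventual conditions
  have hsqrt0 : Filter.Tendsto (fun τ : ℝ => Real.sqrt τ) (nhdsWithin 0 (Ioi 0)) (nhds 0) :=
    (Real.continuous_sqrt.tendsto' 0 0 (by simp)).mono_left nhdsWithin_le_nhds
  have ev1 : ∀ᶠ τ in nhdsWithin (0:ℝ) (Ioi 0), Real.sqrt τ ≤ 1/2 :=
    hsqrt0.eventually_le_const (by norm_num)
  have ev2 : ∀ᶠ τ in nhdsWithin (0:ℝ) (Ioi 0), Real.sqrt (2*τ*M) ≤ 1 := by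
    have hc : Continuous fun τ : ℝ => Real.sqrt (2*τ*M) :=
      Real.continuous_sqrt.comp (by fun_prop)
    exact (((hc.tendsto' 0 0 (by simp)).mono_left
      nhdsWithin_le_nhds).eventually_le_const (by norm_num))
  have ev3 : ∀ᶠ τ in nhdsWithin (0:ℝ) (Ioi 0), K₂ * Real.sqrt τ ≤ 1/2 := by
    have h := hsqrt0.const_mul K₂
    rw [mul_zero] at h
    exact h.eventually_le_const (by norm_num)
  have ev5 : ∀ᶠ τ in nhdsWithin (0:ℝ) (Ioi 0),
      ((2*M + K₂^2) + 2*M) * Real.sqrt τ ≤ η := by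
    have h := hsqrt0.const_mul ((2*M + K₂^2) + 2*M)
    rw [mul_zero] at h
    exact h.eventually_le_const hη
  filter_upwards [self_mem_nhdsWithin, ev1, ev2, ev3, ev5]
    with τ hτ0' h1 h2 h3 h5
  have hτ0 : 0 < τ := hτ0'
  obtain ⟨σ, hσ⟩ : ∃ v : ℝ, v = Real.sqrt τ := ⟨_, rfl⟩
  rw [← hσ] at h1 h3 h5
  have hσ0 : 0 < σ := hσ ▸ Real.sqrt_pos.mpr hτ0
  have hτσ2 : τ = σ^2 := by rw [hσ]; exact (Real.sq_sqrt hτ0.le).symm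
  have hτσ : τ ≤ σ := by rw [hτσ2]; nlinarith only [hσ0, h1]
  have hτ1 : τ < 1 := by linarith only [hτσ, h1]
  have hσ1 : σ ≤ 1 := by linarith only [h1]
  obtain ⟨B, hB⟩ : ∃ v : ℝ, v = Real.sqrt (2*τ*M) := ⟨_, rfl⟩
  rw [← hB] at h2
  have hB0 : 0 ≤ B := hB ▸ Real.sqrt_nonneg _
  obtain ⟨r, hr⟩ : ∃ v : ℝ, v = K₂ * σ := ⟨_, rfl⟩
  rw [← hr] at h3
  have hr0 : 0 < r := by rw [hr]; positivity
  have hr2σ : 2*σ ≤ r := by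
    rw [hr]; exact mul_le_mul_of_nonneg_right hK₂2 hσ0.le
  have h4 : B + r ≤ 2 := by linarith only [h2, h3]
  -- lower-bound each element of the constraint set
  rw [← hK]
  apply le_csInf ⟨_, ramp_mem hx hτ0 hτ1⟩
  rintro E hE
  have hE0 : 0 ≤ E := Sfwd_nonneg hE
  obtain ⟨f, g, ⟨hg, hg2, hrep⟩, hconstr, rfl⟩ := hE
  by_cases hEK : K ≤ energy g + η
  · linarith only [hEK, hη]
  push_neg at hEK
  exfalso
  have hEM : energy g ≤ M := by rw [hM]; linarith only [hEK, hη, hK0, hK ▸ le_refl K]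
  obtain ⟨E, hEdef⟩ : ∃ v : ℝ, v = energy g := ⟨_, rfl⟩
  rw [← hEdef] at hEK hEM hE0
  have h1τ : (0:ℝ) < 1 - τ := by linarith only [hτ1]
  have h1σ : (0:ℝ) < 1 - σ := by linarith only [h1]
  obtain ⟨c, hc⟩ : ∃ v : ℝ, v = ∫ s in (0:ℝ)..τ, g s := ⟨_, rfl⟩
  have hEint : ∫ s in (0:ℝ)..1, (g s)^2 = 2*E := by rw [hEdef, energy]; ring
  have hc2 : c^2 ≤ 2*τ*M := by
    have hs := sq_integral_le hg hg2 (t := τ) ⟨hτ0.le, hτ1.le⟩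
    rw [hEint, ← hc] at hs
    nlinarith only [hs, mul_nonneg hτ0.le (sub_nonneg.mpr hEM)]
  have hcB : |c| ≤ B := by
    rw [← Real.sqrt_sq_eq_abs, hB]
    exact Real.sqrt_le_sqrt hc2
  -- the tilt parameter l via IVT
  have hIcont : Continuous (fun l => σ * Phi (c + l) + (1-σ)*x*Real.exp l) :=
    (continuous_const.mul (Phi_continuous.comp (by fun_prop))).add
      (continuous_const.mul Real.continuous_exp)
  have hIl : σ * Phi (c + -r) + (1-σ)*x*Real.exp (-r) ≤ x := by
    have f1 : Phi (c + -r) ≤ Real.exp 2 := by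
      refine ((Phi_le _).trans (Real.exp_le_exp.mpr ?_)).trans (Real.exp_le_exp.mpr h4)
      have habs := abs_add_le c (-r)
      rw [abs_neg, abs_of_pos hr0] at habs
      linarith only [habs, hcB]
    have f2 : Real.exp (-r) ≤ 1 - r + r^2 := exp_neg_le hr0.le
    have hq : σ * Real.exp 2 ≤ x * (r/2) := by
      have hxK₂ : x * K₂ = 2*x + 2*Real.exp 2 := by rw [hK₂]; field_simp
      have hhalf : x * (r/2) = σ * (x*K₂/2) := by rw [hr]; ring
      rw [hhalf]
      apply mul_le_mul_of_nonneg_left _ hσ0.le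
      rw [hxK₂]; linarith only [Real.exp_pos 2, hx]
    exact aux_left hx hσ0 hσ1 (Phi_pos _).le f1 f2 h3 hr0 hq
  have hIr : x ≤ σ * Phi (c + r) + (1-σ)*x*Real.exp r := by
    have f2 : (1:ℝ) + r ≤ Real.exp r := by linarith only [Real.add_one_le_exp r]
    exact aux_right hx hσ0 h1 (Phi_pos _) f2 hr2σ hr0
  obtain ⟨l, hlmem, hIl_eq⟩ := intermediate_value_Icc (by linarith only [hr0] : -r ≤ r)
    hIcont.continuousOn ⟨hIl, hIr⟩
  have hl2 : l^2 ≤ r^2 := sq_le_sq' hlmem.1 hlmem.2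
  -- the glued competitor
  obtain ⟨α, hα⟩ : ∃ v : ℝ, v = (1-τ)/(1-σ) := ⟨_, rfl⟩
  have hαpos : 0 < α := by rw [hα]; positivity
  obtain ⟨β, hβ⟩ : ∃ v : ℝ, v = τ - α*σ := ⟨_, rfl⟩
  have hb1 : α*σ+β = τ := by rw [hβ]; ring
  have hb2 : α*1+β = 1 := by rw [hβ, hα]; field_simp; ring
  obtain ⟨a, ha⟩ : ∃ v : ℝ, v = (c+l)/σ := ⟨_, rfl⟩
  have haσ : a*σ = c+l := by rw [ha]; field_simp
  -- primitive is continuous, so exp of primitive is integrable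
  have hgl_int := glue_int (a := a) hg hσ0 hσ1 hαpos hb1 hb2 hτ0.le
  have hFcont : ContinuousOn (fun u => ∫ s in (0:ℝ)..u, glue g σ a α β s) (Icc (0:ℝ) 1) := by
    have hcont := intervalIntegral.continuousOn_primitive_interval' hgl_int left_mem_uIcc
    rwa [uIcc_of_le zero_le_one] at hcont
  have hexpF_int : IntervalIntegrable
      (fun u => Real.exp (∫ s in (0:ℝ)..u, glue g σ a α β s)) volume 0 1 := by
    apply ContinuousOn.intervalIntegrable
    rw [uIcc_of_le zero_le_one]
    exact Real.continuous_exp.comp_continuousOn hFcont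
  have hsplit : (∫ u in (0:ℝ)..1, Real.exp (∫ s in (0:ℝ)..u, glue g σ a α β s))
      = (∫ u in (0:ℝ)..σ, Real.exp (∫ s in (0:ℝ)..u, glue g σ a α β s))
        + ∫ u in σ..1, Real.exp (∫ s in (0:ℝ)..u, glue g σ a α β s) := by
    rw [intervalIntegral.integral_add_adjacent_intervals
      (hexpF_int.mono_set (uIcc_subset_uIcc (by simp) (by simp [hσ0.le, hσ1])))
      (hexpF_int.mono_set (uIcc_subset_uIcc (by simp [hσ0.le, hσ1]) (by simp)))]
  have hleft : (∫ u in (0:ℝ)..σ, Real.exp (∫ s in (0:ℝ)..u, glue g σ a α β s))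
      = σ * Phi (c+l) := by
    have hEq : EqOn (fun u => Real.exp (∫ s in (0:ℝ)..u, glue g σ a α β s))
        (fun u => Real.exp (a*u)) (uIcc 0 σ) := by
      intro u hu
      rw [uIcc_of_le hσ0.le] at hu
      simp only []
      rw [glue_primitive_left hσ0 hu]
    rw [intervalIntegral.integral_congr hEq, integral_exp_ramp a hσ0, haσ]
  have hwin : (∫ t in τ..1, Real.exp (f t)) = (1-τ)*x := by
    rw [one_div, inv_mul_eq_div, div_eq_iff h1τ.ne'] at hconstr
    linarith only [hconstr]
  have hright : (∫ u in σ..1, Real.exp (∫ s in (0:ℝ)..u, glue g σ a α β s))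
      = (1-σ)*x*Real.exp l := by
    rw [glue_exp_right hg hσ0 hσ1 hαpos hb1 hb2 hτ0.le]
    have hwin2 : (∫ t in τ..1, Real.exp (∫ s in (0:ℝ)..t, g s)) = (1-τ)*x := by
      rw [← hwin]
      apply intervalIntegral.integral_congr
      intro t ht
      rw [uIcc_of_le hτ1.le] at ht
      simp only []
      rw [hrep t ⟨le_trans hτ0.le ht.1, ht.2⟩]
    rw [hwin2, haσ, ← hc]
    have hαinv : α⁻¹ * (1-τ) = 1-σ := by rw [hα]; field_simp
    rw [show c + l - c = l by ring]
    calc Real.exp l * (α⁻¹ * ((1-τ)*x)) = Real.exp l * ((α⁻¹ * (1-τ)) * x) := by ring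
      _ = (1-σ)*x*Real.exp l := by rw [hαinv]; ring
  -- membership in SBS x
  have hmem : energy (glue g σ a α β) ∈ SBS x := by
    refine ⟨fun u => ∫ s in (0:ℝ)..u, glue g σ a α β s, glue g σ a α β,
      ⟨hgl_int, glue_sq_int hg2 hσ0 hσ1 hαpos hb1 hb2 hτ0.le, fun t _ => rfl⟩, ?_, rfl⟩
    rw [hsplit, hleft, hright]
    exact hIl_eq
  -- energy bound
  have htail : (∫ t in τ..1, (g t)^2) ≤ 2*E := by
    have hsp : (∫ t in (0:ℝ)..τ, (g t)^2) + (∫ t in τ..1, (g t)^2)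
        = ∫ t in (0:ℝ)..1, (g t)^2 :=
      intervalIntegral.integral_add_adjacent_intervals
        (hg2.mono_set (uIcc_subset_uIcc (by simp) (by simp [hτ0.le, hτ1.le])))
        (hg2.mono_set (uIcc_subset_uIcc (by simp [hτ0.le, hτ1.le]) (by simp)))
    have hnn : 0 ≤ ∫ t in (0:ℝ)..τ, (g t)^2 :=
      intervalIntegral.integral_nonneg hτ0.le (fun s _ => sq_nonneg _)
    rw [← hEint]
    linarith only [hsp, hnn]
  have htail0 : 0 ≤ ∫ t in τ..1, (g t)^2 :=
    intervalIntegral.integral_nonneg hτ1.le (fun s _ => sq_nonneg _)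
  have hen : energy (glue g σ a α β) ≤ E + η := by
    rw [energy, glue_energy hg2 hσ0 hσ1 hαpos hb1 hb2 hτ0.le]
    have hrsq : r^2 = K₂^2*σ^2 := by rw [hr]; ring
    have hτM : τ*M = σ^2*M := by rw [hτσ2]
    have e2 : (c+l)^2 ≤ (4*M + 2*K₂^2)*σ^2 := by
      nlinarith only [hc2, hl2, hrsq, hτM, sq_nonneg (c - l)]
    have e3 : a^2*σ ≤ (4*M + 2*K₂^2)*σ := by
      have e1 : a^2*σ = (c+l)^2/σ := by rw [ha]; field_simp
      rw [e1, div_le_iff₀ hσ0]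
      calc (c+l)^2 ≤ (4*M + 2*K₂^2)*σ^2 := e2
        _ = (4*M + 2*K₂^2)*σ*σ := by ring
    have e4 : α * (∫ t in τ..1, (g t)^2) ≤ 2*E + 4*M*σ := by
      have hα2 : α ≤ 1 + 2*(σ - τ) := by
        rw [hα, div_le_iff₀ h1σ]
        nlinarith only [mul_nonneg (sub_nonneg.mpr hτσ) (by linarith only [h1] :
          (0:ℝ) ≤ 1 - 2*σ), hτσ, h1]
      have hmm : (1 + 2*(σ-τ)) ≤ 1 + 2*σ := by linarith only [hτ0]
      calc α * (∫ t in τ..1, (g t)^2) ≤ (1 + 2*(σ-τ)) * (∫ t in τ..1, (g t)^2) :=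
            mul_le_mul_of_nonneg_right hα2 htail0
        _ ≤ (1 + 2*σ) * (2*E) := by
            apply mul_le_mul hmm htail htail0
            linarith only [hσ0]
        _ ≤ 2*E + 4*M*σ := by
            nlinarith only [mul_nonneg hσ0.le (sub_nonneg.mpr hEM)]
    linarith only [e3, e4, h5]
  have hfin : K ≤ energy (glue g σ a α β) := hK ▸ csInf_le (SBS_bdd x) hmem
  linarith only [hfin, hen, hEK]

lemma part_two {x : ℝ} (hx : 0 < x) :
    Filter.Tendsto (fun τ : ℝ => Jfwd x τ) (nhdsWithin 0 (Ioi 0)) (nhds (JBS x)) := by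
  rw [tendsto_order]
  constructor
  · intro b hb
    have hη : 0 < (JBS x - b)/2 := by linarith
    filter_upwards [JBS_le_Jfwd_add hx hη] with τ hτ
    linarith
  · intro b hb
    have hmem : Ioo (0:ℝ) 1 ∈ nhdsWithin (0:ℝ) (Ioi 0) :=
      Ioo_mem_nhdsGT (by norm_num)
    have hup : Filter.Tendsto (fun τ : ℝ => JBS x / (1 - τ)) (nhdsWithin 0 (Ioi 0))
        (nhds (JBS x)) := by
      have hc : ContinuousAt (fun τ : ℝ => JBS x / (1 - τ)) 0 :=
        ContinuousAt.div continuousAt_const (by fun_prop) (by norm_num)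
      have h2 := hc.tendsto.mono_left (nhdsWithin_le_nhds (s := Ioi 0))
      simpa using h2
    filter_upwards [hmem, hup.eventually_lt_const hb] with τ hτ hlt
    exact lt_of_le_of_lt (Jfwd_le_JBS hx hτ.1 hτ.2) hlt

end Aux

/-- For every `x > 0`, (i) `J_fwd(x, τ) → (1/2)(log x)²` as `τ → 1⁻`, and
(ii) `J_fwd(x, τ) → J_BS(x)` as `τ → 0⁺`. -/
theorem Jfwd_limits (x : ℝ) (hx : 0 < x) :
    Filter.Tendsto (fun τ : ℝ => Jfwd x τ) (nhdsWithin 1 (Iio 1))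
      (nhds ((1 / 2) * (Real.log x) ^ 2)) ∧
    Filter.Tendsto (fun τ : ℝ => Jfwd x τ) (nhdsWithin 0 (Ioi 0)) (nhds (JBS x)) :=
  ⟨part_one hx, part_two hx⟩
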